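/- (General Equivalence Theorem, easy direction) If a design ξ* with positive definite information matrix satisfies w(x) g(x)ᵀ I(ξ*)⁻¹ A I(ξ*)⁻¹ g(x) ≤ trace(I(ξ*)⁻¹A) for all x in the design region Ω, then ξ* minimizes EI(ξ) = trace(A I(ξ)⁻¹) over all designs ξ supported on Ω with positive definite information matrix. -/

import Mathlib

open Matrix Finset

lemma trace_nonneg_of_posSemidef {l : ℕ} {M : Matrix (Fin l) (Fin l) ℝ}
    (hM : M.PosSemidef) : 0 ≤ M.trace := by
  refine Finset.sum_nonneg fun i _ => ?_
  exact hM.diag_nonneg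

lemma trace_mul_vecMulVec {l : ℕ} (X : Matrix (Fin l) (Fin l) ℝ) (u : Fin l → ℝ) :
    (X * vecMulVec u u).trace = u ⬝ᵥ X *ᵥ u := by
  simp only [Matrix.trace, Matrix.diag, Matrix.mul_apply, vecMulVec_apply,
    dotProduct, mulVec]
  exact Finset.sum_congr rfl fun i _ => by
    rw [Finset.mul_sum]; exact Finset.sum_congr rfl fun j _ => by ring

/-- General Equivalence Theorem (easy direction). If the design `ξ*` (with support points
`x* : Fin n → Ω`, weights `λ*` and positive definite information matrix `I*`) satisfies
`w(x) g(x)ᵀ I*⁻¹ A I*⁻¹ g(x) ≤ trace (I*⁻¹A)` for all `x ∈ Ω`, then `ξ*` minimizes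
`EI(ξ) = trace (A * I(ξ)⁻¹)` over all finitely supported designs on `Ω` with positive
definite information matrix. -/
theorem stmt14 (l : ℕ) (Ω : Type*) (w : Ω → ℝ) (g : Ω → (Fin l → ℝ)) (hw : ∀ x, 0 < w x)
    (A : Matrix (Fin l) (Fin l) ℝ) (hA : A.PosSemidef)
    (n : ℕ) (xs : Fin n → Ω) (lams : Fin n → ℝ)
    (hlams : ∀ i, 0 ≤ lams i) (hsums : ∑ i, lams i = 1)
    (Is : Matrix (Fin l) (Fin l) ℝ)
    (hIs : Is = ∑ i, lams i • w (xs i) • vecMulVec (g (xs i)) (g (xs i)))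
    (hpds : Is.PosDef)
    (hGET : ∀ x : Ω, w x * (g x ⬝ᵥ (Is⁻¹ * A * Is⁻¹) *ᵥ g x) ≤ (Is⁻¹ * A).trace) :
    ∀ (m : ℕ) (x' : Fin m → Ω) (lam' : Fin m → ℝ),
      (∀ i, 0 ≤ lam' i) → ∑ i, lam' i = 1 →
      ∀ I' : Matrix (Fin l) (Fin l) ℝ,
        I' = ∑ i, lam' i • w (x' i) • vecMulVec (g (x' i)) (g (x' i)) →
        I'.PosDef →
        (A * Is⁻¹).trace ≤ (A * I'⁻¹).trace := by
  intro m x' lam' hlam' hsum' I' hI' hpd'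
  -- abbreviations
  obtain ⟨B, hB⟩ : ∃ B : Matrix (Fin l) (Fin l) ℝ, A = Bᴴ * B := by
    open scoped MatrixOrder in
    exact CStarAlgebra.nonneg_iff_eq_star_mul_self.mp hA.nonneg
  have hNinv : Is⁻¹.IsHermitian := hpds.inv.isHermitian
  have hMinv : I'⁻¹.IsHermitian := hpd'.inv.isHermitian
  have hMul : I'⁻¹ * I' = 1 := Matrix.nonsing_inv_mul _ hpd'.det_pos.ne'.isUnit
  have hMul' : I' * I'⁻¹ = 1 := Matrix.mul_nonsing_inv _ hpd'.det_pos.ne'.isUnit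
  -- Key convexity inequality:
  -- 0 ≤ trace ((I'⁻¹ - 2 Is⁻¹ + Is⁻¹ I' Is⁻¹) * A)
  set D : Matrix (Fin l) (Fin l) ℝ := B * (I'⁻¹ - Is⁻¹) with hD
  have hPSD : (D * I' * Dᴴ).PosSemidef := hpd'.posSemidef.mul_mul_conjTranspose_same D
  have hDH : Dᴴ = (I'⁻¹ - Is⁻¹) * Bᴴ := by
    rw [hD, conjTranspose_mul, conjTranspose_sub, hMinv.eq, hNinv.eq]
  have hexp : D * I' * Dᴴ = B * ((I'⁻¹ - Is⁻¹) * I' * (I'⁻¹ - Is⁻¹)) * Bᴴ := by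
    rw [hDH, hD]; noncomm_ring
  have hX : (I'⁻¹ - Is⁻¹) * I' * (I'⁻¹ - Is⁻¹)
      = I'⁻¹ - Is⁻¹ - Is⁻¹ + Is⁻¹ * I' * Is⁻¹ := by
    have h1 : I'⁻¹ * I' = 1 := hMul
    have h2 : I' * I'⁻¹ = 1 := hMul'
    rw [Matrix.sub_mul, h1, Matrix.sub_mul, Matrix.one_mul, Matrix.mul_sub,
      Matrix.mul_assoc Is⁻¹ I' I'⁻¹, h2, Matrix.mul_one]
    noncomm_ring
  have key : 0 ≤ ((I'⁻¹ - Is⁻¹ - Is⁻¹ + Is⁻¹ * I' * Is⁻¹) * A).trace := by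
    have h0 : 0 ≤ (D * I' * Dᴴ).trace := trace_nonneg_of_posSemidef hPSD
    calc (0:ℝ) ≤ (D * I' * Dᴴ).trace := h0
      _ = ((I'⁻¹ - Is⁻¹ - Is⁻¹ + Is⁻¹ * I' * Is⁻¹) * A).trace := by
          rw [hexp, hX, hB, Matrix.trace_mul_cycle]
          exact Matrix.trace_mul_comm _ _
  -- Bound trace (Is⁻¹ * I' * Is⁻¹ * A) using hGET.
  have hcyc : (Is⁻¹ * I' * Is⁻¹ * A).trace = ((Is⁻¹ * A * Is⁻¹) * I').trace := by
    rw [show Is⁻¹ * I' * Is⁻¹ * A = Is⁻¹ * (I' * Is⁻¹ * A) by noncomm_ring,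
      Matrix.trace_mul_comm,
      show I' * Is⁻¹ * A * Is⁻¹ = I' * (Is⁻¹ * A * Is⁻¹) by noncomm_ring,
      Matrix.trace_mul_comm]
  have hbound : (Is⁻¹ * I' * Is⁻¹ * A).trace ≤ (Is⁻¹ * A).trace := by
    rw [hcyc, hI', Finset.mul_sum, trace_sum]
    calc ∑ i, ((Is⁻¹ * A * Is⁻¹) * (lam' i • w (x' i) • vecMulVec (g (x' i)) (g (x' i)))).trace
        = ∑ i, lam' i * (w (x' i) * (g (x' i) ⬝ᵥ (Is⁻¹ * A * Is⁻¹) *ᵥ g (x' i))) := by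
          refine Finset.sum_congr rfl fun i _ => ?_
          rw [Matrix.mul_smul, Matrix.mul_smul, trace_smul, trace_smul,
            trace_mul_vecMulVec]
          simp [mul_assoc]
      _ ≤ ∑ i, lam' i * (Is⁻¹ * A).trace := by
          refine Finset.sum_le_sum fun i _ => ?_
          exact mul_le_mul_of_nonneg_left (hGET (x' i)) (hlam' i)
      _ = (Is⁻¹ * A).trace := by rw [← Finset.sum_mul, hsum', one_mul]
  -- Combine.
  have hexp2 : ((I'⁻¹ - Is⁻¹ - Is⁻¹ + Is⁻¹ * I' * Is⁻¹) * A).trace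
      = (I'⁻¹ * A).trace - 2 * (Is⁻¹ * A).trace + (Is⁻¹ * I' * Is⁻¹ * A).trace := by
    rw [Matrix.add_mul, Matrix.sub_mul, Matrix.sub_mul, trace_add, trace_sub, trace_sub]
    ring
  have : (Is⁻¹ * A).trace ≤ (I'⁻¹ * A).trace := by
    have := key
    rw [hexp2] at this
    nlinarith [hbound]
  rw [Matrix.trace_mul_comm A Is⁻¹, Matrix.trace_mul_comm A I'⁻¹]
  exact this
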